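/- If W is the product of two independent real zero-mean Gaussian random variables with standard deviations σ₁ and σ₂, then W has pdf f_W(w) = K₀(|w|/(σ₁σ₂))/(π σ₁ σ₂), where K₀ is the modified Bessel function of the second kind of order 0. -/

import Mathlib

open MeasureTheory ProbabilityTheory Real

/-- The modified Bessel function of the second kind of order 0,
`K₀(x) = ∫₀^∞ e^{-x cosh t} dt`. -/
noncomputable def besselK0 (x : ℝ) : ℝ := ∫ t in Set.Ioi (0 : ℝ), Real.exp (-x * Real.cosh t)

section Aux

lemma abs_le_cosh (t : ℝ) : |t| ≤ Real.cosh t := by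
  calc |t| ≤ Real.sinh |t| := Real.self_le_sinh_iff.mpr (abs_nonneg t)
    _ ≤ Real.cosh |t| := (Real.sinh_lt_cosh _).le
    _ = Real.cosh t := Real.cosh_abs t

lemma integrableOn_exp_neg_cosh_Ioi {a : ℝ} (ha : 0 < a) :
    IntegrableOn (fun t => Real.exp (-a * Real.cosh t)) (Set.Ioi (0:ℝ)) := by
  refine (exp_neg_integrableOn_Ioi 0 ha).mono' ?_ ?_
  · exact (Real.continuous_exp.comp
      ((continuous_const.mul Real.continuous_cosh))).aestronglyMeasurable
  · filter_upwards [ae_restrict_mem measurableSet_Ioi] with t ht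
    rw [Real.norm_eq_abs, Real.abs_exp]
    exact Real.exp_le_exp.mpr (by nlinarith [abs_le_cosh t, le_abs_self t])

lemma integrableOn_exp_neg_cosh_Iio {a : ℝ} (ha : 0 < a) :
    IntegrableOn (fun t => Real.exp (-a * Real.cosh t)) (Set.Iio (0:ℝ)) := by
  have himg : Neg.neg '' (Set.Ioi (0:ℝ)) = Set.Iio 0 := by
    rw [Set.image_neg_eq_neg, Set.neg_Ioi, neg_zero]
  have h := integrableOn_image_iff_integrableOn_abs_deriv_smul (s := Set.Ioi (0:ℝ))
    (f := Neg.neg) (f' := fun _ => (-1:ℝ)) measurableSet_Ioi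
    (fun x _ => (hasDerivAt_neg x).hasDerivWithinAt) neg_injective.injOn
    (fun t => Real.exp (-a * Real.cosh t))
  rw [himg] at h
  rw [h]
  simpa [Real.cosh_neg] using integrableOn_exp_neg_cosh_Ioi ha

lemma integrable_exp_neg_cosh {a : ℝ} (ha : 0 < a) :
    Integrable (fun t => Real.exp (-a * Real.cosh t)) := by
  have h0 : volume.restrict ({(0:ℝ)}ᶜ) = volume := by
    rw [Measure.restrict_congr_set (t := Set.univ), Measure.restrict_univ]
    rw [Filter.eventuallyEq_univ]
    exact compl_mem_ae_iff.mpr (measure_singleton 0)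
  have h : IntegrableOn (fun t => Real.exp (-a * Real.cosh t)) ({(0:ℝ)}ᶜ) := by
    rw [← Set.Iio_union_Ioi]
    exact (integrableOn_exp_neg_cosh_Iio ha).union (integrableOn_exp_neg_cosh_Ioi ha)
  rwa [IntegrableOn, h0] at h

lemma integral_exp_neg_cosh {a : ℝ} :
    ∫ t : ℝ, Real.exp (-a * Real.cosh t) = 2 * besselK0 a := by
  rw [besselK0, ← _root_.integral_comp_abs (f := fun t => Real.exp (-a * Real.cosh t))]
  congr 1
  ext t
  rw [Real.cosh_abs]

/-- The integrand in the density of the product of two centered Gaussians: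
`g₁(x) · g₂(w/x) / |x|`. -/
noncomputable def pdfProd (σ₁ σ₂ w x : ℝ) : ℝ :=
  gaussianPDFReal 0 (σ₁^2).toNNReal x * gaussianPDFReal 0 (σ₂^2).toNNReal (w/x) * |x⁻¹|

lemma pdfProd_nonneg (σ₁ σ₂ w x : ℝ) : 0 ≤ pdfProd σ₁ σ₂ w x :=
  mul_nonneg (mul_nonneg (gaussianPDFReal_nonneg _ _ _) (gaussianPDFReal_nonneg _ _ _))
    (abs_nonneg _)

lemma measurable_pdfProd (σ₁ σ₂ w : ℝ) : Measurable (pdfProd σ₁ σ₂ w) := by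
  apply Measurable.mul
  apply Measurable.mul
  · exact measurable_gaussianPDFReal 0 _
  · exact (measurable_gaussianPDFReal 0 _).comp (measurable_const.div measurable_id)
  · exact measurable_id.inv.abs

lemma measurable_pdfProd_uncurry (σ₁ σ₂ : ℝ) :
    Measurable (fun p : ℝ × ℝ => pdfProd σ₁ σ₂ p.2 p.1) := by
  unfold pdfProd
  exact (((measurable_gaussianPDFReal 0 _).comp measurable_fst).mul
    ((measurable_gaussianPDFReal 0 _).comp (measurable_snd.div measurable_fst))).mul
    measurable_fst.inv.abs

lemma pdfProd_neg (σ₁ σ₂ w x : ℝ) : pdfProd σ₁ σ₂ w (-x) = pdfProd σ₁ σ₂ w x := by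
  unfold pdfProd gaussianPDFReal
  simp only [div_neg, sub_zero, neg_sq, abs_inv, abs_neg]

lemma pdfProd_abs (σ₁ σ₂ w x : ℝ) : pdfProd σ₁ σ₂ w |x| = pdfProd σ₁ σ₂ w x := by
  rcases abs_choice x with h | h <;> rw [h]
  exact pdfProd_neg σ₁ σ₂ w x

lemma exp_mul_pdfProd {σ₁ σ₂ : ℝ} (hσ₁ : 0 < σ₁) (hσ₂ : 0 < σ₂) {w : ℝ} (hw : w ≠ 0) (u : ℝ) :
    Real.exp u * pdfProd σ₁ σ₂ w (Real.exp u)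
      = (2 * π * σ₁ * σ₂)⁻¹ * Real.exp (-(|w| / (σ₁ * σ₂)) *
          Real.cosh (2*u - 2*Real.log (Real.sqrt (σ₁ * |w| / σ₂)))) := by
  have hw' : 0 < |w| := abs_pos.mpr hw
  set c := Real.sqrt (σ₁ * |w| / σ₂) with hcdef
  have hcpos : 0 < c := Real.sqrt_pos.mpr (by positivity)
  have hc2 : c^2 = σ₁ * |w| / σ₂ := Real.sq_sqrt (by positivity)
  have hlc : Real.exp (Real.log c) = c := Real.exp_log hcpos
  have hE : (0:ℝ) < Real.exp u := Real.exp_pos u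
  have hs1 : ((σ₁^2).toNNReal : ℝ) = σ₁^2 := Real.coe_toNNReal _ (sq_nonneg _)
  have hs2 : ((σ₂^2).toNNReal : ℝ) = σ₂^2 := Real.coe_toNNReal _ (sq_nonneg _)
  have hr1 : Real.sqrt (2*π*σ₁^2) = Real.sqrt (2*π) * σ₁ := by
    rw [Real.sqrt_mul (by positivity), Real.sqrt_sq hσ₁.le]
  have hr2 : Real.sqrt (2*π*σ₂^2) = Real.sqrt (2*π) * σ₂ := by
    rw [Real.sqrt_mul (by positivity), Real.sqrt_sq hσ₂.le]
  have h2π : Real.sqrt (2*π) * Real.sqrt (2*π) = 2*π := Real.mul_self_sqrt (by positivity)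
  have hsq : (0:ℝ) < Real.sqrt (2*π) := Real.sqrt_pos.mpr (by positivity)
  have hexp : Real.exp (-(Real.exp u - 0)^2/(2*σ₁^2)) * Real.exp (-(w/Real.exp u - 0)^2 / (2*σ₂^2))
      = Real.exp (-(|w|/(σ₁*σ₂)) * Real.cosh (2*u - 2*Real.log c)) := by
    rw [← Real.exp_add]
    congr 1
    rw [Real.cosh_eq]
    have e1 : Real.exp (2*u - 2*Real.log c) = (Real.exp u)^2 / c^2 := by
      rw [show 2*u - 2*Real.log c = u + u - (Real.log c + Real.log c) by ring,
        Real.exp_sub, Real.exp_add, Real.exp_add, hlc]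
      ring
    have e2 : Real.exp (-(2*u - 2*Real.log c)) = c^2 / (Real.exp u)^2 := by
      rw [Real.exp_neg, e1, inv_div]
    rw [e1, e2, hc2]
    have hwsq : (w / Real.exp u - 0)^2 = |w|^2 / (Real.exp u)^2 := by
      rw [sub_zero, div_pow, sq_abs]
    rw [hwsq]
    field_simp
    ring
  have hconst : (Real.sqrt (2*π)*σ₁)⁻¹ * (Real.sqrt (2*π)*σ₂)⁻¹ = (2*π*σ₁*σ₂)⁻¹ := by
    rw [← mul_inv]
    congr 1
    calc (Real.sqrt (2*π)*σ₁) * (Real.sqrt (2*π)*σ₂)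
        = (Real.sqrt (2*π) * Real.sqrt (2*π)) * (σ₁*σ₂) := by ring
      _ = 2*π*σ₁*σ₂ := by rw [h2π]; ring
  rw [pdfProd]
  rw [gaussianPDFReal, gaussianPDFReal, hs1, hs2, hr1, hr2, abs_of_pos (inv_pos.mpr hE)]
  rw [← hconst, ← hexp]
  field_simp

lemma pdfProd_Ioi {σ₁ σ₂ : ℝ} (hσ₁ : 0 < σ₁) (hσ₂ : 0 < σ₂) {w : ℝ} (hw : w ≠ 0) :
    IntegrableOn (pdfProd σ₁ σ₂ w) (Set.Ioi 0) ∧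
      ∫ x in Set.Ioi (0:ℝ), pdfProd σ₁ σ₂ w x
        = besselK0 (|w|/(σ₁*σ₂)) / (2*π*σ₁*σ₂) := by
  have hw' : 0 < |w| := abs_pos.mpr hw
  have himg : Real.exp '' Set.univ = Set.Ioi 0 := by rw [Set.image_univ, Real.range_exp]
  have hderiv : ∀ x ∈ (Set.univ : Set ℝ), HasDerivWithinAt Real.exp (Real.exp x) Set.univ x :=
    fun x _ => (Real.hasDerivAt_exp x).hasDerivWithinAt
  set a := |w|/(σ₁*σ₂) with hadef
  have ha : 0 < a := by positivity
  set L := Real.log (Real.sqrt (σ₁*|w|/σ₂)) with hLdef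
  have hptwise : ∀ u : ℝ, |Real.exp u| • pdfProd σ₁ σ₂ w (Real.exp u)
      = (2*π*σ₁*σ₂)⁻¹ * Real.exp (-a * Real.cosh (2*u - 2*L)) := fun u => by
    rw [smul_eq_mul, abs_of_pos (Real.exp_pos u)]
    exact exp_mul_pdfProd hσ₁ hσ₂ hw u
  have hInt : Integrable
      (fun u : ℝ => (2*π*σ₁*σ₂)⁻¹ * Real.exp (-a * Real.cosh (2*u - 2*L))) := by
    apply Integrable.const_mul
    have h1 : Integrable (fun v : ℝ => Real.exp (-a * Real.cosh (v - 2*L))) := by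
      simpa [sub_eq_add_neg] using (integrable_exp_neg_cosh ha).comp_add_right (-(2*L))
    have h2 := (integrable_comp_mul_left_iff
      (fun v : ℝ => Real.exp (-a*Real.cosh (v - 2*L))) two_ne_zero).mpr h1
    simpa using h2
  have hval : ∫ v : ℝ, Real.exp (-a * Real.cosh (v - 2*L)) = 2 * besselK0 a := by
    rw [show (fun v : ℝ => Real.exp (-a * Real.cosh (v - 2*L)))
        = fun v : ℝ => Real.exp (-a * Real.cosh (v + -(2*L))) by funext v; rw [sub_eq_add_neg]]
    rw [MeasureTheory.integral_add_right_eq_self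
      (fun t : ℝ => Real.exp (-a * Real.cosh t)) (-(2*L))]
    exact integral_exp_neg_cosh
  constructor
  · rw [← himg]
    rw [integrableOn_image_iff_integrableOn_abs_deriv_smul MeasurableSet.univ hderiv
      Real.exp_injective.injOn]
    rw [integrableOn_univ]
    exact hInt.congr (Filter.Eventually.of_forall fun u => (hptwise u).symm)
  · rw [← himg, integral_image_eq_integral_abs_deriv_smul MeasurableSet.univ hderiv
      Real.exp_injective.injOn]
    rw [MeasureTheory.setIntegral_univ]
    rw [integral_congr_ae (Filter.Eventually.of_forall hptwise)]
    rw [integral_const_mul]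
    have hscale : ∫ u : ℝ, Real.exp (-a * Real.cosh (2*u - 2*L))
        = |((2:ℝ))⁻¹| • ∫ v : ℝ, Real.exp (-a * Real.cosh (v - 2*L)) := by
      rw [← MeasureTheory.Measure.integral_comp_mul_left
        (fun v : ℝ => Real.exp (-a * Real.cosh (v - 2*L))) 2]
    rw [hscale, hval, smul_eq_mul]
    rw [abs_of_pos (by norm_num : (0:ℝ) < (2:ℝ)⁻¹)]
    field_simp

lemma pdfProd_Iio {σ₁ σ₂ : ℝ} (hσ₁ : 0 < σ₁) (hσ₂ : 0 < σ₂) {w : ℝ} (hw : w ≠ 0) :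
    IntegrableOn (pdfProd σ₁ σ₂ w) (Set.Iio 0) := by
  have himg : Neg.neg '' (Set.Ioi (0:ℝ)) = Set.Iio 0 := by
    rw [Set.image_neg_eq_neg, Set.neg_Ioi, neg_zero]
  have h := integrableOn_image_iff_integrableOn_abs_deriv_smul (s := Set.Ioi (0:ℝ))
    (f := Neg.neg) (f' := fun _ => (-1:ℝ)) measurableSet_Ioi
    (fun x _ => (hasDerivAt_neg x).hasDerivWithinAt) neg_injective.injOn
    (pdfProd σ₁ σ₂ w)
  rw [himg] at h
  rw [h]
  simpa [pdfProd_neg] using (pdfProd_Ioi hσ₁ hσ₂ hw).1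

lemma integrable_pdfProd {σ₁ σ₂ : ℝ} (hσ₁ : 0 < σ₁) (hσ₂ : 0 < σ₂) {w : ℝ} (hw : w ≠ 0) :
    Integrable (pdfProd σ₁ σ₂ w) := by
  have h0 : volume.restrict ({(0:ℝ)}ᶜ) = volume := by
    rw [Measure.restrict_congr_set (t := Set.univ), Measure.restrict_univ]
    rw [Filter.eventuallyEq_univ]
    exact compl_mem_ae_iff.mpr (measure_singleton 0)
  have h : IntegrableOn (pdfProd σ₁ σ₂ w) ({(0:ℝ)}ᶜ) := by
    rw [← Set.Iio_union_Ioi]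
    exact (pdfProd_Iio hσ₁ hσ₂ hw).union (pdfProd_Ioi hσ₁ hσ₂ hw).1
  rwa [IntegrableOn, h0] at h

lemma lintegral_pdfProd {σ₁ σ₂ : ℝ} (hσ₁ : 0 < σ₁) (hσ₂ : 0 < σ₂) {w : ℝ} (hw : w ≠ 0) :
    ∫⁻ x, ENNReal.ofReal (pdfProd σ₁ σ₂ w x)
      = ENNReal.ofReal (besselK0 (|w|/(σ₁*σ₂)) / (π*σ₁*σ₂)) := by
  rw [← ofReal_integral_eq_lintegral_ofReal (integrable_pdfProd hσ₁ hσ₂ hw)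
    (Filter.Eventually.of_forall fun x => pdfProd_nonneg σ₁ σ₂ w x)]
  congr 1
  have habs : ∫ x, pdfProd σ₁ σ₂ w x = ∫ x, pdfProd σ₁ σ₂ w |x| := by
    congr 1
    funext x
    rw [pdfProd_abs]
  rw [habs, _root_.integral_comp_abs, (pdfProd_Ioi hσ₁ hσ₂ hw).2]
  have hπ : (0:ℝ) < π := Real.pi_pos
  field_simp

end Aux

/-- If `W` is the product of two independent real zero-mean Gaussian random variables with
standard deviations `σ₁` and `σ₂`, then `W` has pdf
`w ↦ K₀(|w|/(σ₁σ₂)) / (π σ₁ σ₂)`. -/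
theorem pdf_product_of_independent_gaussians
    {Ω : Type*} [MeasurableSpace Ω] (μ : Measure Ω) [IsProbabilityMeasure μ]
    (A B : Ω → ℝ) (σ₁ σ₂ : ℝ) (hσ₁ : 0 < σ₁) (hσ₂ : 0 < σ₂)
    (hA : Measurable A) (hB : Measurable B)
    (hindep : IndepFun A B μ)
    (hAdist : Measure.map A μ = gaussianReal 0 ((σ₁ ^ 2).toNNReal))
    (hBdist : Measure.map B μ = gaussianReal 0 ((σ₂ ^ 2).toNNReal)) :
    Measure.map (fun ω => A ω * B ω) μ
      = volume.withDensity (fun w =>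
          ENNReal.ofReal (besselK0 (|w| / (σ₁ * σ₂)) / (Real.pi * σ₁ * σ₂))) := by
  have hv₁ : ((σ₁^2).toNNReal) ≠ 0 := by
    rw [ne_eq, Real.toNNReal_eq_zero, not_le]
    positivity
  have hv₂ : ((σ₂^2).toNNReal) ≠ 0 := by
    rw [ne_eq, Real.toNNReal_eq_zero, not_le]
    positivity
  set p₁ := gaussianPDF 0 (σ₁^2).toNNReal with hp₁
  set p₂ := gaussianPDF 0 (σ₂^2).toNNReal with hp₂
  have hm : Measurable (fun p : ℝ × ℝ => p.1 * p.2) := measurable_fst.mul measurable_snd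
  have hmap : Measure.map (fun ω => A ω * B ω) μ
      = Measure.map (fun p : ℝ × ℝ => p.1 * p.2)
          ((volume.withDensity p₁).prod (volume.withDensity p₂)) := by
    rw [hp₁, hp₂, ← gaussianReal_of_var_ne_zero 0 hv₁, ← gaussianReal_of_var_ne_zero 0 hv₂,
      ← hAdist, ← hBdist,
      ← (indepFun_iff_map_prod_eq_prod_map_map hA.aemeasurable hB.aemeasurable).mp hindep,
      Measure.map_map hm (hA.prodMk hB)]
    rfl
  rw [hmap]
  refine Measure.ext fun s hs => ?_
  have h_ae : ∀ᵐ x ∂(volume : Measure ℝ), x ≠ 0 := by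
    rw [ae_iff]
    simp
  rw [Measure.map_apply hm hs, Measure.prod_apply (hm hs),
    lintegral_withDensity_eq_lintegral_mul volume (measurable_gaussianPDF 0 _)
      (measurable_measure_prodMk_left (hm hs))]
  have hstep : ∀ x : ℝ, x ≠ 0 →
      (p₁ * fun x =>
          (volume.withDensity p₂) (Prod.mk x ⁻¹' ((fun p : ℝ × ℝ => p.1 * p.2) ⁻¹' s))) x
        = ∫⁻ z in s, ENNReal.ofReal (pdfProd σ₁ σ₂ z x) ∂volume := by
    intro x hx
    have hpre : (Prod.mk x ⁻¹' ((fun p : ℝ × ℝ => p.1 * p.2) ⁻¹' s))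
        = (fun y => x * y) ⁻¹' s := rfl
    have hmeas_pre : MeasurableSet ((fun y => x * y) ⁻¹' s) := (measurable_const_mul x) hs
    have hp₂div : Measurable fun z : ℝ => p₂ (z / x) :=
      (measurable_gaussianPDF 0 _).comp (measurable_id.div_const x)
    simp only [Pi.mul_apply, hpre]
    rw [withDensity_apply _ hmeas_pre]
    have h1 : ∫⁻ y in (fun y => x * y) ⁻¹' s, p₂ y ∂volume
        = ∫⁻ y in (fun y => x * y) ⁻¹' s, p₂ ((x * y) / x) ∂volume := by
      refine setLIntegral_congr_fun hmeas_pre (fun y _ => ?_)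
      rw [mul_div_cancel_left₀ _ hx]
    have h2 : ∫⁻ z in s, p₂ (z / x) ∂(Measure.map (fun y => x * y) volume)
        = ∫⁻ y in (fun y => x * y) ⁻¹' s, p₂ ((x * y) / x) ∂volume :=
      setLIntegral_map hs hp₂div (measurable_const_mul x)
    rw [h1, ← h2, Real.map_volume_mul_left hx, Measure.restrict_smul, lintegral_smul_measure]
    rw [smul_eq_mul, ← mul_assoc]
    have hctop : p₁ x * ENNReal.ofReal |x⁻¹| ≠ ⊤ :=
      ENNReal.mul_ne_top (by simp [hp₁, gaussianPDF_def]) ENNReal.ofReal_ne_top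
    rw [← lintegral_const_mul' (p₁ x * ENNReal.ofReal |x⁻¹|) _ hctop]
    congr 1
    funext z
    rw [pdfProd, ENNReal.ofReal_mul (mul_nonneg (gaussianPDFReal_nonneg _ _ _)
      (gaussianPDFReal_nonneg _ _ _)), ENNReal.ofReal_mul (gaussianPDFReal_nonneg _ _ _)]
    simp only [hp₁, hp₂, gaussianPDF_def, abs_inv]
    ring
  rw [lintegral_congr_ae (h_ae.mono fun x hx => hstep x hx)]
  rw [lintegral_lintegral_swap (((measurable_pdfProd_uncurry σ₁ σ₂).ennreal_ofReal).aemeasurable)]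
  have h_ae' : ∀ᵐ z ∂(volume.restrict s), z ≠ 0 :=
    h_ae.filter_mono (ae_mono Measure.restrict_le_self)
  rw [lintegral_congr_ae (h_ae'.mono fun z hz => lintegral_pdfProd hσ₁ hσ₂ hz)]
  rw [withDensity_apply _ hs]
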